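/- Let A be an n×n real matrix, B an n×m real matrix, K an m×n real matrix, C a p×n real matrix, M an n×p real matrix, and λ ∈ [0,1]. Set Φ = A + BK and, for γ ∈ {0,1}, let Ψ̃(γ) be the 2n×2n block matrix [[A - γAMC, 0], [γAMC, Φ]]. Suppose there exists a symmetric positive definite n×n matrix Ξ₁ such that Ξ₁ - (λ(A - AMC)Ξ₁(A - AMC)ᵀ + (1-λ)AΞ₁Aᵀ) is positive definite, and there exists a symmetric positive definite n×n matrix Ξ₂ such that Ξ₂ - ΦΞ₂Φᵀ is positive definite. Then there exists a symmetric positive definite 2n×2n matrix Ξ such that Ξ - (λΨ̃(1)ΞΨ̃(1)ᵀ + (1-λ)Ψ̃(0)ΞΨ̃(0)ᵀ) is positive definite. -/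

import Mathlib

open Matrix

section Aux

variable {ι : Type*} [Fintype ι] [DecidableEq ι]

private lemma contQuad (M : Matrix ι ι ℝ) : Continuous fun x : ι → ℝ => x ⬝ᵥ (M *ᵥ x) := by
  unfold dotProduct Matrix.mulVec
  exact continuous_finset_sum _ fun i _ => (continuous_apply i).mul
    (continuous_finset_sum _ fun j _ => continuous_const.mul (continuous_apply j))

private lemma dotSelfNonneg (x : ι → ℝ) : 0 ≤ x ⬝ᵥ x :=
  Finset.sum_nonneg fun i _ => mul_self_nonneg (x i)

private lemma hermSmul {M : Matrix ι ι ℝ} (hM : M.IsHermitian) (c : ℝ) :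
    (c • M).IsHermitian := by
  unfold Matrix.IsHermitian at *
  rw [conjTranspose_smul, hM, star_trivial]

private lemma posDefSmul {M : Matrix ι ι ℝ} (hM : M.PosDef) {c : ℝ} (hc : 0 < c) :
    (c • M).PosDef := by
  refine Matrix.PosDef.of_dotProduct_mulVec_pos (hermSmul hM.1 c) fun x hx => ?_
  rw [smul_mulVec, dotProduct_smul, smul_eq_mul]
  exact mul_pos hc (hM.dotProduct_mulVec_pos hx)

/-- Key perturbation lemma: a positive definite matrix minus a small multiple of a
hermitian matrix stays positive definite. -/
private lemma exists_posdef_sub {D N : Matrix ι ι ℝ} (hD : D.PosDef) (hN : N.IsHermitian) :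
    ∃ c : ℝ, 0 < c ∧ (D - c • N).PosDef := by
  have hherm : ∀ c : ℝ, (D - c • N).IsHermitian := fun c => hD.1.sub (hermSmul hN c)
  rcases isEmpty_or_nonempty ι with h | h
  · exact ⟨1, one_pos, hherm 1, fun x hx => absurd (Subsingleton.elim x 0) hx⟩
  · set S : Set (ι → ℝ) := {x | x ⬝ᵥ x = 1} with hSdef
    have hc0 : Continuous fun x : ι → ℝ => x ⬝ᵥ x := by
      unfold dotProduct
      exact continuous_finset_sum _ fun i _ => (continuous_apply i).mul (continuous_apply i)
    have hclosed : IsClosed S := isClosed_eq hc0 continuous_const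
    have hsub : S ⊆ Set.pi Set.univ fun _ : ι => Set.Icc (-1 : ℝ) 1 := by
      intro x hx i _
      have hle : x i * x i ≤ 1 := by
        have h1 := Finset.single_le_sum (f := fun j => x j * x j)
          (fun j _ => mul_self_nonneg (x j)) (Finset.mem_univ i)
        have hx1 : x ⬝ᵥ x = 1 := hx
        calc x i * x i ≤ ∑ j, x j * x j := h1
          _ = 1 := hx1
      constructor <;> nlinarith
    have hScomp : IsCompact S :=
      (isCompact_univ_pi fun _ => isCompact_Icc).of_isClosed_subset hclosed hsub
    obtain ⟨i0⟩ := h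
    have hSne : S.Nonempty := by
      refine ⟨Pi.single i0 1, ?_⟩
      show (Pi.single i0 1 : ι → ℝ) ⬝ᵥ Pi.single i0 1 = 1
      rw [single_dotProduct, one_mul, Pi.single_eq_same]
    obtain ⟨a, haS, ha⟩ := hScomp.exists_isMinOn hSne (contQuad D).continuousOn
    obtain ⟨b, hbS, hb⟩ := hScomp.exists_isMaxOn hSne (contQuad N).continuousOn
    set α := a ⬝ᵥ (D *ᵥ a) with hαdef
    set β := b ⬝ᵥ (N *ᵥ b) with hβdef
    have ha0 : a ≠ 0 := by
      intro h0
      have : (0 : ι → ℝ) ⬝ᵥ (0 : ι → ℝ) = 1 := by rw [← h0]; exact haS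
      simp at this
    have hα : 0 < α := by
      have := hD.dotProduct_mulVec_pos ha0
      rwa [star_trivial] at this
    set c := α / (|β| + 1) with hcdef
    have hβpos : (0 : ℝ) < |β| + 1 := by positivity
    have hc : 0 < c := div_pos hα hβpos
    have hcβ : c * (|β| + 1) = α := div_mul_cancel₀ _ hβpos.ne'
    refine ⟨c, hc, Matrix.PosDef.of_dotProduct_mulVec_pos (hherm c) fun x hx => ?_⟩
    have ht : 0 < x ⬝ᵥ x := by
      rcases lt_or_eq_of_le (dotSelfNonneg x) with h' | h'
      · exact h'
      · exact absurd (dotProduct_self_eq_zero.mp h'.symm) hx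
    set r := Real.sqrt (x ⬝ᵥ x) with hrdef
    have hr0 : 0 < r := Real.sqrt_pos.mpr ht
    have hrr : r * r = x ⬝ᵥ x := Real.mul_self_sqrt (dotSelfNonneg x)
    set u := r⁻¹ • x with hudef
    have hxu : x = r • u := by
      rw [hudef, smul_smul, mul_inv_cancel₀ hr0.ne', one_smul]
    have huS : u ∈ S := by
      show u ⬝ᵥ u = 1
      rw [hudef, smul_dotProduct, dotProduct_smul, smul_eq_mul, smul_eq_mul, ← mul_assoc]
      rw [← mul_inv]
      rw [hrr]
      exact inv_mul_cancel₀ ht.ne'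
    have hquadD : x ⬝ᵥ (D *ᵥ x) = (r * r) * (u ⬝ᵥ (D *ᵥ u)) := by
      rw [hxu, smul_dotProduct, mulVec_smul, dotProduct_smul, smul_eq_mul, smul_eq_mul]
      ring
    have hquadN : x ⬝ᵥ (N *ᵥ x) = (r * r) * (u ⬝ᵥ (N *ᵥ u)) := by
      rw [hxu, smul_dotProduct, mulVec_smul, dotProduct_smul, smul_eq_mul, smul_eq_mul]
      ring
    have hDu : α ≤ u ⬝ᵥ (D *ᵥ u) := ha huS
    have hNu : u ⬝ᵥ (N *ᵥ u) ≤ β := hb huS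
    have hkey : 0 < u ⬝ᵥ (D *ᵥ u) - c * (u ⬝ᵥ (N *ᵥ u)) := by
      have h1 : β ≤ |β| := le_abs_self β
      nlinarith
    rw [star_trivial, sub_mulVec, dotProduct_sub, smul_mulVec, dotProduct_smul,
      smul_eq_mul, hquadD, hquadN]
    calc (0:ℝ) < (r * r) * (u ⬝ᵥ (D *ᵥ u) - c * (u ⬝ᵥ (N *ᵥ u))) :=
          mul_pos (mul_pos hr0 hr0) hkey
      _ = r * r * (u ⬝ᵥ (D *ᵥ u)) - c * (r * r * (u ⬝ᵥ (N *ᵥ u))) := by ring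

end Aux

section Blocks

variable {m' n' : Type*} [Fintype m'] [Fintype n'] [DecidableEq m']

private lemma ctT {k l : Type*} (P : Matrix k l ℝ) : Pᴴ = Pᵀ :=
  conjTranspose_eq_transpose_of_trivial P

/-- One direction of the Schur complement criterion, over ℝ with transposes. -/
private lemma posDef_fromBlocks {A : Matrix m' m' ℝ} (B : Matrix m' n' ℝ)
    {D : Matrix n' n' ℝ} (hA : A.PosDef) [Invertible A]
    (hS : (D - Bᵀ * A⁻¹ * B).PosDef) : (fromBlocks A B Bᵀ D).PosDef := by
  rw [← ctT B] at hS ⊢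
  refine Matrix.PosDef.of_dotProduct_mulVec_pos ?_ ?_
  · exact (Matrix.IsHermitian.fromBlocks₁₁ B D hA.1).mpr hS.1
  · intro u hu
    rw [← Sum.elim_comp_inl_inr u] at hu ⊢
    set x := u ∘ Sum.inl
    set y := u ∘ Sum.inr
    have key := schur_complement_eq₁₁ B D x y hA.1
    rw [dotProduct_mulVec, key]
    by_cases hy : y = 0
    · have hx : x ≠ 0 := by
        intro hx0
        apply hu
        funext i
        cases i with
        | inl i => show x i = 0; rw [hx0]; rfl
        | inr i => show y i = 0; rw [hy]; rfl
      have h1 : 0 < star (x + (A⁻¹ * B) *ᵥ y) ᵥ* A ⬝ᵥ (x + (A⁻¹ * B) *ᵥ y) := by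
        rw [hy, mulVec_zero, add_zero, ← dotProduct_mulVec]
        exact hA.dotProduct_mulVec_pos hx
      have h2 : 0 ≤ star y ᵥ* (D - Bᴴ * A⁻¹ * B) ⬝ᵥ y := by
        rw [← dotProduct_mulVec]
        exact hS.posSemidef.dotProduct_mulVec_nonneg y
      linarith
    · have h1 : 0 ≤ star (x + (A⁻¹ * B) *ᵥ y) ᵥ* A ⬝ᵥ (x + (A⁻¹ * B) *ᵥ y) := by
        rw [← dotProduct_mulVec]
        exact hA.posSemidef.dotProduct_mulVec_nonneg _
      have h2 : 0 < star y ᵥ* (D - Bᴴ * A⁻¹ * B) ⬝ᵥ y := by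
        rw [← dotProduct_mulVec]
        exact hS.dotProduct_mulVec_pos hy
      linarith

end Blocks

/-- Mean-square stability of the block lower-triangular extended matrix
`Ψ̃(γ) = [[A - γAMC, 0], [γAMC, Φ]]` (with `Φ = A + BK`) follows from Lyapunov
certificates for the two diagonal blocks. -/
theorem stmt0 (n m p : ℕ)
    (A : Matrix (Fin n) (Fin n) ℝ) (B : Matrix (Fin n) (Fin m) ℝ)
    (K : Matrix (Fin m) (Fin n) ℝ) (C : Matrix (Fin p) (Fin n) ℝ)
    (M : Matrix (Fin n) (Fin p) ℝ) (lam : ℝ) (hlam0 : 0 ≤ lam) (hlam1 : lam ≤ 1)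
    (Φ : Matrix (Fin n) (Fin n) ℝ) (hΦ : Φ = A + B * K)
    (Ψ0 Ψ1 : Matrix (Fin n ⊕ Fin n) (Fin n ⊕ Fin n) ℝ)
    (hΨ0 : Ψ0 = Matrix.fromBlocks A 0 0 Φ)
    (hΨ1 : Ψ1 = Matrix.fromBlocks (A - A * M * C) 0 (A * M * C) Φ)
    (Ξ₁ : Matrix (Fin n) (Fin n) ℝ) (hΞ₁ : Ξ₁.PosDef)
    (h₁ : (Ξ₁ - (lam • ((A - A * M * C) * Ξ₁ * (A - A * M * C)ᵀ)
            + (1 - lam) • (A * Ξ₁ * Aᵀ))).PosDef)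
    (Ξ₂ : Matrix (Fin n) (Fin n) ℝ) (hΞ₂ : Ξ₂.PosDef)
    (h₂ : (Ξ₂ - Φ * Ξ₂ * Φᵀ).PosDef) :
    ∃ Ξ : Matrix (Fin n ⊕ Fin n) (Fin n ⊕ Fin n) ℝ, Ξ.PosDef ∧
      (Ξ - (lam • (Ψ1 * Ξ * Ψ1ᵀ) + (1 - lam) • (Ψ0 * Ξ * Ψ0ᵀ))).PosDef := by
  set G := A - A * M * C with hG
  set H := A * M * C with hH
  set D₁ := Ξ₁ - (lam • (G * Ξ₁ * Gᵀ) + (1 - lam) • (A * Ξ₁ * Aᵀ)) with hD₁def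
  set D₂ := Ξ₂ - Φ * Ξ₂ * Φᵀ with hD₂def
  set X := G * Ξ₁ * Hᵀ with hXdef
  set Y := H * Ξ₁ * Hᵀ with hYdef
  set N := lam • Y + (lam * lam) • (Xᵀ * D₁⁻¹ * X) with hNdef
  have hΞ₁T : Ξ₁ᵀ = Ξ₁ := by rw [← ctT Ξ₁]; exact hΞ₁.1
  have hN : N.IsHermitian := by
    apply IsHermitian.add
    · apply hermSmul
      rw [hYdef, ← ctT H]
      exact isHermitian_mul_mul_conjTranspose H hΞ₁.1
    · apply hermSmul
      rw [← ctT X]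
      exact isHermitian_conjTranspose_mul_mul X h₁.1.inv
  obtain ⟨c, hc, hcpd⟩ := exists_posdef_sub h₂ hN
  haveI : Invertible (c • Ξ₁) := (posDefSmul hΞ₁ hc).isUnit.invertible
  haveI : Invertible (c • D₁) := (posDefSmul h₁ hc).isUnit.invertible
  haveI : Invertible c := invertibleOfNonzero hc.ne'
  refine ⟨fromBlocks (c • Ξ₁) 0 0 Ξ₂, ?_, ?_⟩
  · have := posDef_fromBlocks (A := c • Ξ₁) (B := (0 : Matrix (Fin n) (Fin n) ℝ))
      (posDefSmul hΞ₁ hc) (by simpa using hΞ₂)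
    simpa using this
  · have heq : fromBlocks (c • Ξ₁) 0 0 Ξ₂ -
        (lam • (Ψ1 * fromBlocks (c • Ξ₁) 0 0 Ξ₂ * Ψ1ᵀ)
          + (1 - lam) • (Ψ0 * fromBlocks (c • Ξ₁) 0 0 Ξ₂ * Ψ0ᵀ)) =
        fromBlocks (c • D₁) ((-(lam * c)) • X) ((-(lam * c)) • X)ᵀ
          (D₂ - (lam * c) • Y) := by
      rw [hΨ1, hΨ0]
      simp only [fromBlocks_transpose, fromBlocks_multiply, fromBlocks_smul,
        transpose_zero, Matrix.mul_zero, Matrix.zero_mul, add_zero, zero_add,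
        smul_zero, sub_eq_add_neg, fromBlocks_neg, fromBlocks_add]
      refine fromBlocks_inj.mpr ⟨?_, ?_, ?_, ?_⟩
      · rw [hD₁def]
        simp only [Matrix.mul_smul, Matrix.smul_mul]
        module
      · simp only [Matrix.mul_smul, Matrix.smul_mul, hXdef]
        module
      · have h1 : Xᵀ = H * Ξ₁ * Gᵀ := by
          rw [hXdef, Matrix.transpose_mul (G * Ξ₁) Hᵀ, Matrix.transpose_mul G Ξ₁,
            Matrix.transpose_transpose H, hΞ₁T, ← Matrix.mul_assoc]
        rw [transpose_smul, h1]
        simp only [Matrix.mul_smul, Matrix.smul_mul]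
        module
      · rw [hD₂def, hYdef]
        simp only [Matrix.mul_smul, Matrix.smul_mul]
        module
    rw [heq]
    apply posDef_fromBlocks _ (posDefSmul h₁ hc)
    have hSchur : D₂ - (lam * c) • Y - ((-(lam * c)) • X)ᵀ * (c • D₁)⁻¹ * ((-(lam * c)) • X)
        = D₂ - c • N := by
      rw [Matrix.inv_smul (A := D₁) c (isUnit_iff_ne_zero.mpr h₁.det_pos.ne'), invOf_eq_inv c]
      rw [transpose_smul]
      simp only [Matrix.smul_mul, Matrix.mul_smul, smul_smul, hNdef]
      rw [smul_add, smul_smul, smul_smul]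
      have hscal : -(lam * c) * (c⁻¹ * -(lam * c)) = c * (lam * lam) := by
        field_simp
      rw [hscal]
      module
    rw [hSchur]
    exact hcpd
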